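/- Fix t ∈ (0,1) and p ∈ (1,∞). For each integer k ≥ 2, set y_k = min(1, φ⁺(t, 1/k)) and let x_{k,t} ∈ ℝ^k be the probability vector whose first entry is y_k and whose remaining k−1 entries all equal (1−y_k)/(k−1). Then lim_{k→∞} H_p(x_{k,t}) = (p/(1−p))·log t, where H_p(x) = (1/(1−p))·log ∑_{i=1}^k x_i^p. -/

import Mathlib

noncomputable section

/-- φ⁺(s,t) = s + t − 2st + 2√(st(1−s)(1−t)). -/
def phiPlus (s t : ℝ) : ℝ :=
  s + t - 2 * s * t + 2 * Real.sqrt (s * t * (1 - s) * (1 - t))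

/-- φ⁻(s,t) = s + t − 2st − 2√(st(1−s)(1−t)). -/
def phiMinus (s t : ℝ) : ℝ :=
  s + t - 2 * s * t - 2 * Real.sqrt (s * t * (1 - s) * (1 - t))

end

lemma sum_if_fin (n : ℕ) (A B : ℝ) :
    ∑ i : Fin (n + 1), (if (i : ℕ) = 0 then A else B) = A + n * B := by
  rw [Fin.sum_univ_succ]
  simp [Fin.val_succ, mul_comm]

/-- for fixed t ∈ (0,1) and p ∈ (1,∞), the p-Rényi entropy of the optimal
output spectrum x_{k,t} (largest entry y_k = min(1, φ⁺(t,1/k)), the other k−1 entries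
all equal to (1−y_k)/(k−1)) converges, as k → ∞, to (p/(1−p))·log t. -/
theorem limit_renyi_optimal_spectrum (t : ℝ) (ht : t ∈ Set.Ioo (0 : ℝ) 1)
    (p : ℝ) (hp : 1 < p) :
    Filter.Tendsto
      (fun k : ℕ => (1 / (1 - p)) * Real.log (∑ i : Fin k,
        (if (i : ℕ) = 0 then min 1 (phiPlus t (1 / (k : ℝ)))
          else (1 - min 1 (phiPlus t (1 / (k : ℝ)))) / ((k : ℝ) - 1)) ^ p))
      Filter.atTop (nhds ((p / (1 - p)) * Real.log t)) := by
  obtain ⟨ht0, ht1⟩ := ht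
  set F : ℕ → ℝ := fun k => min 1 (phiPlus t (1 / (k : ℝ))) with hFdef
  -- F tends to t
  have hcont : Continuous fun u : ℝ => phiPlus t u := by
    unfold phiPlus; continuity
  have hphi0 : phiPlus t 0 = t := by
    simp [phiPlus]
  have hphi : Filter.Tendsto (fun k : ℕ => phiPlus t (1 / (k : ℝ))) Filter.atTop (nhds t) := by
    have := (hcont.continuousAt (x := 0)).tendsto.comp tendsto_one_div_atTop_nhds_zero_nat
    rwa [hphi0] at this
  have hF : Filter.Tendsto F Filter.atTop (nhds t) := by
    have : Filter.Tendsto (fun k : ℕ => min 1 (phiPlus t (1 / (k : ℝ)))) Filter.atTop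
        (nhds (min 1 t)) := tendsto_const_nhds.min hphi
    rwa [min_eq_right ht1.le] at this
  have hFle : ∀ k, F k ≤ 1 := fun k => min_le_left _ _
  -- F k ^ p tends to t ^ p
  have hFp : Filter.Tendsto (fun k => F k ^ p) Filter.atTop (nhds (t ^ p)) :=
    ((Real.continuousAt_rpow_const t p (Or.inl ht0.ne')).tendsto).comp hF
  -- (1 - F k) ^ p tends to (1 - t) ^ p
  have h1Fp : Filter.Tendsto (fun k => (1 - F k) ^ p) Filter.atTop (nhds ((1 - t) ^ p)) :=
    ((Real.continuousAt_rpow_const (1 - t) p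
      (Or.inl (by linarith : (1:ℝ) - t ≠ 0))).tendsto).comp (tendsto_const_nhds.sub hF)
  -- ((k:ℝ) - 1) ^ (1 - p) tends to 0
  have hk1 : Filter.Tendsto (fun k : ℕ => (k : ℝ) - 1) Filter.atTop Filter.atTop := by
    have := tendsto_natCast_atTop_atTop (R := ℝ)
    exact Filter.tendsto_atTop_add_const_right _ (-1) this
  have hpow0 : Filter.Tendsto (fun k : ℕ => ((k : ℝ) - 1) ^ (1 - p)) Filter.atTop (nhds 0) := by
    have h := tendsto_rpow_neg_atTop (y := p - 1) (by linarith)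
    have := h.comp hk1
    convert this using 2 with k
    simp only [Function.comp_apply]
    congr 1; ring
  -- the tail term tends to 0
  have htail : Filter.Tendsto (fun k : ℕ => (1 - F k) ^ p * ((k : ℝ) - 1) ^ (1 - p))
      Filter.atTop (nhds 0) := by
    have := h1Fp.mul hpow0
    rwa [mul_zero] at this
  -- total sum tendsto t ^ p
  have hS : Filter.Tendsto (fun k : ℕ => F k ^ p + (1 - F k) ^ p * ((k : ℝ) - 1) ^ (1 - p))
      Filter.atTop (nhds (t ^ p)) := by
    have := hFp.add htail
    rwa [add_zero] at this
  have htp : (0:ℝ) < t ^ p := Real.rpow_pos_of_pos ht0 p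
  have hlog : Filter.Tendsto
      (fun k : ℕ => (1 / (1 - p)) * Real.log (F k ^ p + (1 - F k) ^ p * ((k : ℝ) - 1) ^ (1 - p)))
      Filter.atTop (nhds ((p / (1 - p)) * Real.log t)) := by
    have hcl : Filter.Tendsto
        (fun k : ℕ => Real.log (F k ^ p + (1 - F k) ^ p * ((k : ℝ) - 1) ^ (1 - p)))
        Filter.atTop (nhds (Real.log (t ^ p))) :=
      ((Real.continuousAt_log htp.ne').tendsto).comp hS
    have := hcl.const_mul (1 / (1 - p))
    rw [Real.log_rpow ht0] at this
    convert this using 2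
    ring
  refine hlog.congr' ?_
  filter_upwards [Filter.eventually_ge_atTop 2] with k hk
  obtain ⟨n, rfl⟩ : ∃ n, k = n + 1 := ⟨k - 1, (Nat.succ_pred_eq_of_pos (by omega)).symm⟩
  have hn : (1:ℝ) ≤ n := by exact_mod_cast Nat.one_le_iff_ne_zero.mpr (by omega)
  have hnpos : (0:ℝ) < ((n + 1 : ℕ) : ℝ) - 1 := by push_cast; linarith
  have h1F : 0 ≤ 1 - F (n + 1) := by linarith [hFle (n + 1)]
  have hrw : ∀ i : Fin (n + 1),
      (if (i : ℕ) = 0 then F (n+1) else (1 - F (n+1)) / (((n+1 : ℕ) : ℝ) - 1)) ^ p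
      = (if (i : ℕ) = 0 then F (n+1) ^ p else ((1 - F (n+1)) / (((n+1:ℕ) : ℝ) - 1)) ^ p) :=
    fun i => apply_ite (· ^ p) _ _ _
  show (1 / (1 - p)) * Real.log _ = (1 / (1 - p)) * Real.log _
  congr 2
  calc F (n+1) ^ p + (1 - F (n+1)) ^ p * (((n+1:ℕ) : ℝ) - 1) ^ (1 - p)
      = F (n+1) ^ p + (n : ℝ) * ((1 - F (n+1)) / (((n+1:ℕ) : ℝ) - 1)) ^ p := by
        congr 1
        rw [Real.div_rpow h1F hnpos.le, Real.rpow_sub hnpos, Real.rpow_one]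
        have hcast : ((n+1:ℕ) : ℝ) - 1 = (n : ℝ) := by push_cast; ring
        rw [hcast]
        have hne : ((n : ℝ)) ^ p ≠ 0 := by
          positivity
        field_simp
    _ = ∑ i : Fin (n+1), (if (i : ℕ) = 0 then F (n+1)
          else (1 - F (n+1)) / (((n+1:ℕ) : ℝ) - 1)) ^ p := by
        rw [Finset.sum_congr rfl (fun i _ => hrw i), sum_if_fin]
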